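/- For a one-clock alternating timed automaton A with transition formulas in disjunctive normal form: L(A) is nonempty if and only if a bad state is reachable in the region-abstracted transition system H from the initial state W₀ = H(P₀). -/

import Mathlib

/-- Clock constraints over a set `C` of clocks: comparisons with natural
number constants, closed under conjunction and negation. -/
inductive ClockConstraint (C : Type) : Type where
  | lt : C → ℕ → ClockConstraint C
  | le : C → ℕ → ClockConstraint C
  | conj : ClockConstraint C → ClockConstraint C → ClockConstraint C
  | neg : ClockConstraint C → ClockConstraint C

/-- Satisfaction of a clock constraint by a clock valuation. -/
def ClockConstraint.sat {C : Type} (v : C → NNReal) : ClockConstraint C → Prop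
  | .lt x c => (v x : ℝ) < (c : ℝ)
  | .le x c => (v x : ℝ) ≤ (c : ℝ)
  | .conj s t => s.sat v ∧ t.sat v
  | .neg s => ¬ s.sat v

/-- Positive boolean formulas over a set `X` of propositions. -/
inductive PosBool (X : Type) : Type where
  | atom : X → PosBool X
  | conj : PosBool X → PosBool X → PosBool X
  | disj : PosBool X → PosBool X → PosBool X

/-- Evaluation of a positive boolean formula under a valuation of atoms. -/
def PosBool.eval {X : Type} (f : X → Prop) : PosBool X → Prop
  | .atom x => f x
  | .conj b c => b.eval f ∧ c.eval f
  | .disj b c => b.eval f ∨ c.eval f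

/-- A positive boolean formula is disjunction-free (purely conjunctive). -/
def PosBool.orFree {X : Type} : PosBool X → Prop
  | .atom _ => True
  | .conj b c => b.orFree ∧ c.orFree
  | .disj _ _ => False

/-- A positive boolean formula is conjunction-free (purely disjunctive). -/
def PosBool.andFree {X : Type} : PosBool X → Prop
  | .atom _ => True
  | .conj _ _ => False
  | .disj b c => b.andFree ∧ c.andFree

open Classical in
/-- Reset the clocks in `r` to zero. -/
noncomputable def resetVal {C : Type} (v : C → NNReal) (r : Set C) : C → NNReal :=
  fun x => if x ∈ r then 0 else v x

/-- A (finite) timed word: each letter comes with the delay elapsed since the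
previous letter (a nonnegative real). -/
abbrev TimedWord (A : Type) : Type := List (A × NNReal)
/-- A one-clock alternating timed automaton whose transition formulas are in
disjunctive normal form: for each location and letter, a finite list of
pairs (guard, DNF), where a DNF is a nonempty list of disjuncts, each
disjunct a nonempty list of atoms `(target location, reset flag)`.  The
`partition` field is the Partition condition. -/
structure ATA1 (A Q : Type) where
  init : Q
  accept : Set Q
  trans : Q → A → List (ClockConstraint Unit × List (List (Q × Bool)))
  partition : ∀ (q : Q) (a : A) (v : NNReal),
    ∃! gb : ClockConstraint Unit × List (List (Q × Bool)),
      gb ∈ trans q a ∧ gb.1.sat (fun _ => v)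
  dnf_nonempty : ∀ (q : Q) (a : A), ∀ gb ∈ trans q a,
    gb.2 ≠ [] ∧ ∀ d ∈ gb.2, d ≠ []

/-- Acceptance of a timed word (delay time-stamps) from a configuration:
Eve picks a disjunct, and all its atoms must accept the rest of the word. -/
def ATA1.AccFrom {A Q : Type} (M : ATA1 A Q) : TimedWord A → Q → NNReal → Prop
  | [], q, _ => q ∈ M.accept
  | (a, t) :: w, q, v =>
      ∃ gb ∈ M.trans q a, gb.1.sat (fun _ => v + t) ∧
        ∃ d ∈ gb.2, ∀ qb ∈ d, M.AccFrom w qb.1 (if qb.2 then 0 else v + t)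

/-- The timed language of a one-clock DNF alternating timed automaton. -/
def ATA1.lang {A Q : Type} (M : ATA1 A Q) : Set (TimedWord A) :=
  { w | M.AccFrom w M.init 0 }

/-- One transition of the transition system `T`: states are finite sets of
configurations `(q, v)`; on `(a, t)` every configuration advances by `t`,
one disjunct of the (unique) applicable transition formula is chosen for
each configuration, and the resulting configurations are collected. -/
def ATA1.Tstep {A Q : Type} (M : ATA1 A Q) (a : A) (t : NNReal)
    (P P' : Set (Q × NNReal)) : Prop :=
  ∃ choice : Q × NNReal → List (Q × Bool),
    (∀ c ∈ P, ∃ gb ∈ M.trans c.1 a, gb.1.sat (fun _ => c.2 + t) ∧ choice c ∈ gb.2) ∧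
    P' = ⋃ c ∈ P, { c' | ∃ qb ∈ choice c, c' = (qb.1, if qb.2 then 0 else c.2 + t) }

/-- A transition of the untimed transition system `T̂`: a transition of `T`
with the time information erased. -/
def ATA1.UStep {A Q : Type} (M : ATA1 A Q) (a : A) (P P' : Set (Q × NNReal)) : Prop :=
  ∃ t : NNReal, M.Tstep a t P P'

/-- A state of `T` (or `T̂`) is bad iff all its locations are accepting. -/
def ATA1.Bad {A Q : Type} (M : ATA1 A Q) (P : Set (Q × NNReal)) : Prop :=
  ∀ c ∈ P, c.1 ∈ M.accept
/-- The largest constant occurring in a clock constraint. -/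
def ClockConstraint.maxConst {C : Type} : ClockConstraint C → ℕ
  | .lt _ c => c
  | .le _ c => c
  | .conj s t => max s.maxConst t.maxConst
  | .neg s => s.maxConst

/-- The largest constant `c_max` occurring in the transition function. -/
noncomputable def ATA1.cmax {A Q : Type} [Fintype A] [Fintype Q] (M : ATA1 A Q) : ℕ :=
  Finset.univ.sup fun q : Q => Finset.univ.sup fun a : A =>
    ((M.trans q a).map fun gb => gb.1.maxConst).foldr max 0

open Classical in
/-- The index of the region of a clock value `v`, for maximal constant `K`:
the regions `{0}, (0,1), {1}, (1,2), …, {K}, (K,∞)` are numbered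
`0, 1, …, 2K, 2K+1`. -/
noncomputable def regIdx (K : ℕ) (v : NNReal) : ℕ :=
  if (K : NNReal) < v then 2 * K + 1
  else if (⌊v⌋₊ : NNReal) = v then 2 * ⌊v⌋₊ else 2 * ⌊v⌋₊ + 1

/-- `W = H(P)`: the word `W` over `Λ = 𝒫(Q × reg)` is obtained from the set
`P` of configurations by replacing each `(q, v)` by `(q, reg v, fract v)`,
sorting by the fractional parts, grouping configurations with equal
fractional parts into one letter, and forgetting the fractional parts. -/
def IsAbstraction {Q : Type} (K : ℕ) (P : Set (Q × NNReal))
    (W : List (Set (Q × ℕ))) : Prop :=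
  ∃ fs : List ℝ,
    fs.Pairwise (· < ·) ∧
    (∀ f : ℝ, f ∈ fs ↔ ∃ c ∈ P, Int.fract (c.2 : ℝ) = f) ∧
    W.length = fs.length ∧
    ∀ (i : ℕ) (hw : i < W.length) (hi : i < fs.length),
      W.get ⟨i, hw⟩ =
        { qr | ∃ c ∈ P, Int.fract (c.2 : ℝ) = fs.get ⟨i, hi⟩ ∧ qr = (c.1, regIdx K c.2) }

/-- A transition (labelled by letter `a`) of the region-abstracted transition
system `H`: there are states `P`, `P'` of `T̂` with a transition
`P --a--> P'` whose abstractions are the two given words. -/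
def HStep {A Q : Type} [Fintype A] [Fintype Q] (M : ATA1 A Q) (a : A)
    (W W' : List (Set (Q × ℕ))) : Prop :=
  ∃ P P' : Set (Q × NNReal), P.Finite ∧
    IsAbstraction M.cmax P W ∧ IsAbstraction M.cmax P' W' ∧ M.UStep a P P'

/-- A state of `H` is bad iff every location occurring in one of its letters
is accepting. -/
def BadW {Q : Type} (F : Set Q) (W : List (Set (Q × ℕ))) : Prop :=
  ∀ s ∈ W, ∀ qr ∈ s, qr.1 ∈ F

/-- The monotone domination ordering on words over a powerset alphabet:
`W₁ ⪯ W₂` iff there is a strictly increasing map of positions along which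
the letters of `W₁` are included in those of `W₂`. -/
def MonDom {X : Type} (W₁ W₂ : List (Set X)) : Prop :=
  ∃ f : Fin W₁.length → Fin W₂.length,
    StrictMono f ∧ ∀ i : Fin W₁.length, W₁.get i ⊆ W₂.get (f i)


/-! ### Basic facts about `regIdx` -/

section Reg

open Int

lemma natFloor_coe (v : NNReal) : ⌊(v:ℝ)⌋₊ = ⌊v⌋₊ := by
  refine le_antisymm ?_ ?_
  · exact Nat.le_floor (by exact_mod_cast Nat.floor_le v.coe_nonneg)
  · exact Nat.le_floor (by exact_mod_cast Nat.floor_le (by positivity : (0:NNReal) ≤ v))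

lemma nnreal_eq_floor_add_fract (v : NNReal) :
    (v:ℝ) = (⌊(v:ℝ)⌋₊ : ℝ) + Int.fract (v:ℝ) := by
  rw [natCast_floor_eq_intCast_floor v.coe_nonneg]
  rw [Int.fract]; ring

lemma fract_eq_zero_iff_natfloor (v : NNReal) :
    Int.fract (v:ℝ) = 0 ↔ ((⌊(v:ℝ)⌋₊ : ℝ) = (v:ℝ)) := by
  rw [natCast_floor_eq_intCast_floor v.coe_nonneg, Int.fract]
  constructor <;> intro h <;> linarith

/-- Real-valued characterization of `regIdx`. -/
lemma regIdx_eq (K : ℕ) (v : NNReal) :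
    regIdx K v = if (K:ℝ) < (v:ℝ) then 2*K+1
      else if Int.fract (v:ℝ) = 0 then 2 * ⌊(v:ℝ)⌋₊ else 2 * ⌊(v:ℝ)⌋₊ + 1 := by
  unfold regIdx
  have h1 : ((K : NNReal) < v) ↔ ((K:ℝ) < (v:ℝ)) := by
    rw [← NNReal.coe_lt_coe]; norm_cast
  have h2 : ((⌊v⌋₊ : NNReal) = v) ↔ (Int.fract (v:ℝ) = 0) := by
    rw [fract_eq_zero_iff_natfloor, natFloor_coe, ← NNReal.coe_inj]
    norm_cast
  rw [natFloor_coe]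
  by_cases hc : (K : NNReal) < v
  · rw [if_pos hc, if_pos (h1.1 hc)]
  · rw [if_neg hc, if_neg (fun h => hc (h1.2 h))]
    by_cases hz : (⌊v⌋₊ : NNReal) = v
    · rw [if_pos hz, if_pos (h2.1 hz)]
    · rw [if_neg hz, if_neg (fun h => hz (h2.2 h))]

lemma regIdx_of_gt {K : ℕ} {v : NNReal} (h : (K:ℝ) < (v:ℝ)) :
    regIdx K v = 2*K+1 := by rw [regIdx_eq, if_pos h]

lemma regIdx_le_iff {K : ℕ} {v : NNReal} : regIdx K v ≤ 2*K ↔ (v:ℝ) ≤ (K:ℝ) := by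
  rw [regIdx_eq]
  by_cases h : (K:ℝ) < (v:ℝ)
  · simp [h, not_le.2 h]
  · push_neg at h
    have hf : ⌊(v:ℝ)⌋₊ ≤ K := Nat.floor_le_of_le (by exact_mod_cast h)
    simp only [if_neg (not_lt.2 h), h, iff_true]
    by_cases hz : Int.fract (v:ℝ) = 0
    · simp [hz]; omega
    · simp only [if_neg hz]
      have : ⌊(v:ℝ)⌋₊ < K := by
        rcases lt_or_eq_of_le hf with h' | h'
        · exact h'
        · exfalso; apply hz
          have h1 := nnreal_eq_floor_add_fract v
          have h2 := Int.fract_nonneg (v:ℝ)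
          rw [h'] at h1; linarith
      omega

lemma regIdx_of_le {K : ℕ} {v : NNReal} (h : (v:ℝ) ≤ (K:ℝ)) :
    regIdx K v = (if Int.fract (v:ℝ) = 0 then 2 * ⌊(v:ℝ)⌋₊ else 2 * ⌊(v:ℝ)⌋₊ + 1) := by
  rw [regIdx_eq, if_neg (not_lt.2 h)]

/-- For bounded values, equal region indices give equal floors and matching
integrality. -/
lemma regIdx_bounded_data {K : ℕ} {v w : NNReal} (hv : (v:ℝ) ≤ K) (hw : (w:ℝ) ≤ K)
    (h : regIdx K v = regIdx K w) :
    ⌊(v:ℝ)⌋₊ = ⌊(w:ℝ)⌋₊ ∧ (Int.fract (v:ℝ) = 0 ↔ Int.fract (w:ℝ) = 0) := by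
  rw [regIdx_of_le hv, regIdx_of_le hw] at h
  by_cases h1 : Int.fract (v:ℝ) = 0 <;> by_cases h2 : Int.fract (w:ℝ) = 0 <;>
    simp [h1, h2] at h ⊢ <;> omega

lemma regIdx_even_iff {K : ℕ} {v : NNReal} (hv : (v:ℝ) ≤ K) :
    Even (regIdx K v) ↔ Int.fract (v:ℝ) = 0 := by
  rw [regIdx_of_le hv]
  by_cases hz : Int.fract (v:ℝ) = 0 <;> simp [hz, parity_simps]

/-- `regIdx` of a value of the form `N + g`, `g ∈ [0,1)`. -/
lemma regIdx_congr {K N : ℕ} {v w : NNReal} {g g' : ℝ}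
    (hv : (v:ℝ) = N + g) (hw : (w:ℝ) = N + g')
    (hg0 : 0 ≤ g) (hg1 : g < 1) (hg0' : 0 ≤ g') (hg1' : g' < 1)
    (hzz : g = 0 ↔ g' = 0) : regIdx K v = regIdx K w := by
  have hfv : Int.fract (v:ℝ) = g := by
    rw [hv, add_comm, Int.fract_add_natCast, Int.fract_eq_self.2 ⟨hg0, hg1⟩]
  have hfw : Int.fract (w:ℝ) = g' := by
    rw [hw, add_comm, Int.fract_add_natCast, Int.fract_eq_self.2 ⟨hg0', hg1'⟩]
  have hflv : ⌊(v:ℝ)⌋₊ = N := by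
    rw [hv, add_comm, Nat.floor_add_natCast hg0, Nat.floor_eq_zero.2 hg1]; omega
  have hflw : ⌊(w:ℝ)⌋₊ = N := by
    rw [hw, add_comm, Nat.floor_add_natCast hg0', Nat.floor_eq_zero.2 hg1']; omega
  have hK : ((K:ℝ) < (v:ℝ)) ↔ ((K:ℝ) < (w:ℝ)) := by
    rw [hv, hw]
    by_cases hgz : g = 0
    · rw [hgz, hzz.1 hgz]
    · have hg'z : g' ≠ 0 := fun h => hgz (hzz.2 h)
      have h1 : 0 < g := lt_of_le_of_ne hg0 (Ne.symm hgz)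
      have h2 : 0 < g' := lt_of_le_of_ne hg0' (Ne.symm hg'z)
      constructor <;> intro h
      · have : (K:ℝ) < N + 1 := by linarith
        have h3 : K ≤ N := by exact_mod_cast Nat.lt_add_one_iff.1 (by exact_mod_cast this)
        have : (K:ℝ) ≤ N := by exact_mod_cast h3
        linarith
      · have : (K:ℝ) < N + 1 := by linarith
        have h3 : K ≤ N := by exact_mod_cast Nat.lt_add_one_iff.1 (by exact_mod_cast this)
        have : (K:ℝ) ≤ N := by exact_mod_cast h3
        linarith
  rw [regIdx_eq, regIdx_eq, hfv, hfw, hflv, hflw]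
  by_cases h : (K:ℝ) < (v:ℝ)
  · rw [if_pos h, if_pos (hK.1 h)]
  · rw [if_neg h, if_neg (fun hh => h (hK.2 hh))]
    by_cases hgz : g = 0
    · rw [if_pos hgz, if_pos (hzz.1 hgz)]
    · rw [if_neg hgz, if_neg (fun hh => hgz (hzz.2 hh))]

/-- Guard satisfaction only depends on the region (for guards with constants
bounded by `K`). -/
lemma sat_congr {K : ℕ} {v w : NNReal} (h : regIdx K v = regIdx K w)
    (φ : ClockConstraint Unit) (hφ : φ.maxConst ≤ K) :
    (φ.sat (fun _ => v) ↔ φ.sat (fun _ => w)) := by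
  induction φ with
  | lt x c =>
    simp only [ClockConstraint.sat]
    have hc : c ≤ K := hφ
    by_cases hb : (K:ℝ) < (v:ℝ)
    · have hb' : (K:ℝ) < (w:ℝ) := by
        by_contra hw
        push_neg at hw
        have h1 : regIdx K w ≤ 2*K := regIdx_le_iff.2 hw
        rw [← h, regIdx_of_gt hb] at h1; omega
      constructor <;> intro hlt <;> exfalso
      · have : (c:ℝ) ≤ K := by exact_mod_cast hc
        linarith
      · have : (c:ℝ) ≤ K := by exact_mod_cast hc
        linarith
    · push_neg at hb
      have hb' : (w:ℝ) ≤ (K:ℝ) := by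
        by_contra hw
        push_neg at hw
        have h1 : regIdx K v ≤ 2*K := regIdx_le_iff.2 hb
        rw [h, regIdx_of_gt hw] at h1; omega
      obtain ⟨hfl, _⟩ := regIdx_bounded_data hb hb' h
      rw [← Nat.floor_lt v.coe_nonneg, ← Nat.floor_lt w.coe_nonneg, hfl]
  | le x c =>
    simp only [ClockConstraint.sat]
    have hc : c ≤ K := hφ
    by_cases hb : (K:ℝ) < (v:ℝ)
    · have hb' : (K:ℝ) < (w:ℝ) := by
        by_contra hw
        push_neg at hw
        have h1 : regIdx K w ≤ 2*K := regIdx_le_iff.2 hw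
        rw [← h, regIdx_of_gt hb] at h1; omega
      constructor <;> intro hlt <;> exfalso
      · have : (c:ℝ) ≤ K := by exact_mod_cast hc
        linarith
      · have : (c:ℝ) ≤ K := by exact_mod_cast hc
        linarith
    · push_neg at hb
      have hb' : (w:ℝ) ≤ (K:ℝ) := by
        by_contra hw
        push_neg at hw
        have h1 : regIdx K v ≤ 2*K := regIdx_le_iff.2 hb
        rw [h, regIdx_of_gt hw] at h1; omega
      obtain ⟨hfl, hfr⟩ := regIdx_bounded_data hb hb' h
      have ev := nnreal_eq_floor_add_fract v
      have ew := nnreal_eq_floor_add_fract w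
      have hv0 := Int.fract_nonneg (v:ℝ)
      have hv1 := Int.fract_lt_one (v:ℝ)
      have hw0 := Int.fract_nonneg (w:ℝ)
      have hw1 := Int.fract_lt_one (w:ℝ)
      constructor <;> intro hle
      · rcases lt_or_eq_of_le hle with h' | h'
        · have : ⌊(v:ℝ)⌋₊ < c := (Nat.floor_lt v.coe_nonneg).2 h'
          rw [hfl] at this
          have : (⌊(w:ℝ)⌋₊ : ℝ) + 1 ≤ c := by exact_mod_cast this
          linarith
        · -- v = c exactly, so fract v = 0 and floor v = c
          have hfz : Int.fract (v:ℝ) = 0 := by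
            have : Int.fract (v:ℝ) = Int.fract ((c:ℕ):ℝ) := by rw [h']
            rw [this, Int.fract_natCast]
          have hwz := hfr.1 hfz
          have : (⌊(v:ℝ)⌋₊:ℝ) = c := by rw [ev, hfz] at h'; linarith
          have hflc : ⌊(v:ℝ)⌋₊ = c := by exact_mod_cast this
          rw [ew, hwz, ← hfl, hflc]; simp
      · rcases lt_or_eq_of_le hle with h' | h'
        · have : ⌊(w:ℝ)⌋₊ < c := (Nat.floor_lt w.coe_nonneg).2 h'
          rw [← hfl] at this
          have : (⌊(v:ℝ)⌋₊ : ℝ) + 1 ≤ c := by exact_mod_cast this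
          linarith
        · have hfz : Int.fract (w:ℝ) = 0 := by
            have : Int.fract (w:ℝ) = Int.fract ((c:ℕ):ℝ) := by rw [h']
            rw [this, Int.fract_natCast]
          have hvz := hfr.2 hfz
          have : (⌊(w:ℝ)⌋₊:ℝ) = c := by rw [ew, hfz] at h'; linarith
          have hflc : ⌊(w:ℝ)⌋₊ = c := by exact_mod_cast this
          rw [ev, hvz, hfl, hflc]; simp
  | conj s t ihs iht =>
    simp only [ClockConstraint.sat, ClockConstraint.maxConst, max_le_iff] at hφ ⊢
    rw [ihs hφ.1, iht hφ.2]
  | neg s ihs =>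
    simp only [ClockConstraint.sat, ClockConstraint.maxConst] at hφ ⊢
    rw [ihs hφ]

end Reg

/-! ### Existence of a matching delay fractional part -/

section Delta

lemma fract_eq_zero_cases {x : ℝ} (h0 : 0 ≤ x) (h2 : x < 2) :
    Int.fract x = 0 ↔ x = 0 ∨ x = 1 := by
  constructor
  · intro h
    by_cases h1 : x < 1
    · left; rw [← Int.fract_eq_self.2 ⟨h0, h1⟩]; exact h
    · right
      push_neg at h1
      have : Int.fract (x - 1) = Int.fract x := by
        have := Int.fract_sub_intCast x (1:ℤ)
        simpa using this
      rw [h] at this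
      have hx := Int.fract_eq_self.2 ⟨by linarith, by linarith⟩ |>.symm.trans this
      linarith
  · rintro (h | h) <;> simp [h]

lemma fract_of_lt_one {x : ℝ} (h0 : 0 ≤ x) (h1 : x < 1) : Int.fract x = x :=
  Int.fract_eq_self.2 ⟨h0, h1⟩

lemma fract_of_ge_one {x : ℝ} (h0 : 1 ≤ x) (h1 : x < 2) : Int.fract x = x - 1 := by
  have : Int.fract (x - 1) = Int.fract x := by
    have := Int.fract_sub_intCast x (1:ℤ); simpa using this
  rw [← this, fract_of_lt_one (by linarith) (by linarith)]

lemma delta_exists (F : Finset ℝ) (ρ : ℝ → ℝ) (θ : ℝ)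
    (hθ0 : 0 ≤ θ) (hθ1 : θ < 1)
    (hF : ∀ f ∈ F, 0 ≤ f ∧ f < 1)
    (hρ : ∀ f ∈ F, 0 ≤ ρ f ∧ ρ f < 1)
    (hmono : ∀ f ∈ F, ∀ f' ∈ F, f < f' → ρ f < ρ f')
    (hzero : ∀ f ∈ F, (f = 0 ↔ ρ f = 0)) :
    ∃ δ : ℝ, 0 ≤ δ ∧ δ ≤ 1 ∧ ∀ f ∈ F,
      (1 ≤ f + δ ↔ 1 ≤ ρ f + θ) ∧
      (Int.fract (f + δ) = 0 ↔ Int.fract (ρ f + θ) = 0) := by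
  by_cases hex : ∃ f₀ ∈ F, ρ f₀ + θ = 1
  · obtain ⟨f₀, hf₀F, hf₀⟩ := hex
    obtain ⟨hf₀0, hf₀1⟩ := hF f₀ hf₀F
    refine ⟨1 - f₀, by linarith, by linarith, fun f hf => ?_⟩
    obtain ⟨hf0, hf1⟩ := hF f hf
    obtain ⟨hr0, hr1⟩ := hρ f hf
    have hord : f₀ ≤ f ↔ 1 ≤ ρ f + θ := by
      constructor
      · intro h
        rcases lt_or_eq_of_le h with h' | h'
        · have := hmono f₀ hf₀F f hf h'
          linarith
        · rw [← h']; linarith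
      · intro h
        by_contra hc
        push_neg at hc
        have := hmono f hf f₀ hf₀F hc
        linarith
    constructor
    · rw [← hord]; constructor <;> intro h <;> linarith
    · rw [fract_eq_zero_cases (by linarith) (by linarith),
        fract_eq_zero_cases (by linarith) (by linarith)]
      have hne0 : ¬ (f + (1 - f₀) = 0) := by
        intro h
        have : f = f₀ - 1 := by linarith
        linarith
      have hne0' : ¬ (ρ f + θ = 0) := by
        intro h
        have h1 : ρ f = 0 := by linarith
        have h2 : θ = 0 := by linarith
        have h3 := (hρ f₀ hf₀F).2
        rw [h2] at hf₀; linarith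
      simp only [hne0, hne0', false_or]
      constructor
      · intro h
        have hff : f = f₀ := by linarith
        rw [hff]; exact hf₀
      · intro h
        have : ρ f = ρ f₀ := by linarith
        have hff : f = f₀ := by
          by_contra hc
          rcases lt_or_gt_of_ne hc with h' | h'
          · have := hmono f hf f₀ hf₀F h'; linarith
          · have := hmono f₀ hf₀F f hf h'; linarith
        rw [hff]; ring
  · by_cases hz : θ = 0 ∧ (0:ℝ) ∈ F
    · refine ⟨0, le_refl _, by norm_num, fun f hf => ?_⟩
      obtain ⟨hf0, hf1⟩ := hF f hf
      obtain ⟨hr0, hr1⟩ := hρ f hf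
      rw [hz.1]
      constructor
      · constructor <;> intro h <;> linarith
      · rw [add_zero, add_zero, fract_of_lt_one hf0 hf1, fract_of_lt_one hr0 hr1]
        constructor
        · intro h
          exact (hzero f hf).1 h
        · intro h
          exact (hzero f hf).2 h
    · -- no value becomes integral
      have hnint : ∀ f ∈ F, Int.fract (ρ f + θ) ≠ 0 := by
        intro f hf h
        obtain ⟨hr0, hr1⟩ := hρ f hf
        rw [fract_eq_zero_cases (by linarith) (by linarith)] at h
        rcases h with h | h
        · have h1 : ρ f = 0 := by linarith
          have h2 : θ = 0 := by linarith
          have : f = 0 := (hzero f hf).2 h1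
          exact hz ⟨h2, this ▸ hf⟩
        · exact hex ⟨f, hf, h⟩
      classical
      set Wr := F.filter (fun f => 1 ≤ ρ f + θ) with hWr
      set NW := F.filter (fun f => ρ f + θ < 1) with hNW
      have hWrF : ∀ f ∈ Wr, f ∈ F ∧ 1 ≤ ρ f + θ := fun f hf => by
        simpa [hWr] using (Finset.mem_filter.1 hf)
      have hNWF : ∀ f ∈ NW, f ∈ F ∧ ρ f + θ < 1 := fun f hf => by
        simpa [hNW] using (Finset.mem_filter.1 hf)
      set lo := if h : Wr.Nonempty then 1 - Wr.min' h else 0 with hlo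
      set hi := if h : NW.Nonempty then 1 - NW.max' h else 1 with hhi
      have hlo0 : 0 ≤ lo := by
        rw [hlo]
        split
        · next h =>
          have h1 := (hWrF _ (Wr.min'_mem h)).1
          have h2 := (hF _ h1).2
          linarith
        · exact le_refl _
      have hhi1 : hi ≤ 1 := by
        rw [hhi]
        split
        · next h =>
          have h1 := (hNWF _ (NW.max'_mem h)).1
          have h2 := (hF _ h1).1
          linarith
        · exact le_refl _
      have hlohi : lo < hi := by
        rw [hlo, hhi]
        split
        · next hw =>
          have hmn := hWrF _ (Wr.min'_mem hw)
          split
          · next hn =>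
            have hmx := hNWF _ (NW.max'_mem hn)
            have : NW.max' hn < Wr.min' hw := by
              by_contra hc
              push_neg at hc
              rcases lt_or_eq_of_le hc with h' | h'
              · have := hmono _ hmn.1 _ hmx.1 h'
                linarith [hmn.2, hmx.2]
              · rw [h'] at hmn
                linarith [hmn.2, hmx.2]
            linarith
          · next hn =>
            -- Wr nonempty, NW empty: show 0 < min' Wr
            have hne : ρ (Wr.min' hw) + θ ≠ 1 := fun h => hex ⟨_, hmn.1, h⟩
            have h1 : 1 < ρ (Wr.min' hw) + θ := lt_of_le_of_ne hmn.2 (Ne.symm hne)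
            have h2 : 0 < ρ (Wr.min' hw) := by linarith
            have h3 : Wr.min' hw ≠ 0 := by
              intro h
              have := (hzero _ hmn.1).1 h
              linarith
            have h4 := (hF _ hmn.1).1
            have : 0 < Wr.min' hw := lt_of_le_of_ne h4 (Ne.symm h3)
            linarith
        · next hw =>
          split
          · next hn =>
            have hmx := hNWF _ (NW.max'_mem hn)
            have := (hF _ hmx.1).2
            linarith
          · norm_num
      refine ⟨(lo + hi)/2, by linarith, by linarith, fun f hf => ?_⟩
      obtain ⟨hf0, hf1⟩ := hF f hf
      have hδlo : lo < (lo+hi)/2 := by linarith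
      have hδhi : (lo+hi)/2 < hi := by linarith
      by_cases hwf : 1 ≤ ρ f + θ
      · have hfWr : f ∈ Wr := Finset.mem_filter.2 ⟨hf, hwf⟩
        have hWrne : Wr.Nonempty := ⟨f, hfWr⟩
        have hmin : Wr.min' hWrne ≤ f := Wr.min'_le f hfWr
        have hlov : lo = 1 - Wr.min' hWrne := by rw [hlo, dif_pos hWrne]
        have hge : 1 < f + (lo+hi)/2 := by rw [hlov] at hδlo ⊢; linarith
        have hlt2 : f + (lo+hi)/2 < 2 := by linarith
        constructor
        · constructor <;> intro _
          · exact hwf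
          · linarith
        · rw [fract_of_ge_one (by linarith) hlt2]
          constructor
          · intro h; linarith
          · intro h; exact absurd h (hnint f hf)
      · push_neg at hwf
        have hfNW : f ∈ NW := Finset.mem_filter.2 ⟨hf, hwf⟩
        have hNWne : NW.Nonempty := ⟨f, hfNW⟩
        have hmax : f ≤ NW.max' hNWne := NW.le_max' f hfNW
        have hhiv : hi = 1 - NW.max' hNWne := by rw [hhi, dif_pos hNWne]
        have hlt : f + (lo+hi)/2 < 1 := by rw [hhiv] at hδhi; linarith
        have hgt0 : 0 < f + (lo+hi)/2 := by linarith
        constructor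
        · constructor <;> intro h
          · linarith
          · linarith
        · rw [fract_of_lt_one (by linarith) hlt]
          constructor
          · intro h; linarith
          · intro h; exact absurd h (hnint f hf)
end Delta

/-! ### The simulation relation -/

section Simdef

variable {A Q : Type}

/-- Fractional parts of bounded configurations. -/
def BddF (K : ℕ) (P : Set (Q × NNReal)) : Set ℝ :=
  {f | ∃ c ∈ P, (c.2:ℝ) ≤ (K:ℝ) ∧ Int.fract (c.2:ℝ) = f}

/-- The letter of bounded configurations with fractional part `f`. -/
def Letter (K : ℕ) (P : Set (Q × NNReal)) (f : ℝ) : Set (Q × ℕ) :=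
  {qr | ∃ c ∈ P, (c.2:ℝ) ≤ (K:ℝ) ∧ Int.fract (c.2:ℝ) = f ∧ qr = (c.1, regIdx K c.2)}

/-- Locations of unbounded configurations. -/
def UbLoc (K : ℕ) (P : Set (Q × NNReal)) : Set Q :=
  {q | ∃ v : NNReal, (q, v) ∈ P ∧ (K:ℝ) < (v:ℝ)}

/-- `P₂` is simulated by `P₁`. -/
def Sim (K : ℕ) (P₂ P₁ : Set (Q × NNReal)) : Prop :=
  UbLoc K P₂ ⊆ UbLoc K P₁ ∧
  ∃ ρ : ℝ → ℝ,
    (∀ f ∈ BddF K P₂, ∀ f' ∈ BddF K P₂, f < f' → ρ f < ρ f') ∧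
    ∀ f ∈ BddF K P₂, ρ f ∈ BddF K P₁ ∧ Letter K P₂ f ⊆ Letter K P₁ (ρ f)

lemma BddF_mem_Ico {K : ℕ} {P : Set (Q × NNReal)} {f : ℝ} (h : f ∈ BddF K P) :
    0 ≤ f ∧ f < 1 := by
  obtain ⟨c, _, _, hf⟩ := h
  exact hf ▸ ⟨Int.fract_nonneg _, Int.fract_lt_one _⟩

lemma letter_even_iff {K : ℕ} {P : Set (Q × NNReal)} {f : ℝ} (hf : f ∈ BddF K P) :
    f = 0 ↔ ∃ qr ∈ Letter K P f, Even qr.2 := by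
  constructor
  · intro h
    obtain ⟨c, hc, hb, hfr⟩ := hf
    exact ⟨(c.1, regIdx K c.2), ⟨c, hc, hb, hfr, rfl⟩,
      (regIdx_even_iff hb).2 (by rw [hfr, h])⟩
  · rintro ⟨qr, ⟨c, hc, hb, hfr, rfl⟩, hev⟩
    rw [← hfr]
    exact (regIdx_even_iff hb).1 hev

lemma sim_zero_iff {K : ℕ} {P₂ P₁ : Set (Q × NNReal)} {ρ : ℝ → ℝ}
    (hρ : ∀ f ∈ BddF K P₂, ρ f ∈ BddF K P₁ ∧ Letter K P₂ f ⊆ Letter K P₁ (ρ f))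
    {f : ℝ} (hf : f ∈ BddF K P₂) : f = 0 ↔ ρ f = 0 := by
  obtain ⟨hmem, hsub⟩ := hρ f hf
  constructor
  · intro h
    obtain ⟨qr, hqr, hev⟩ := (letter_even_iff hf).1 h
    exact (letter_even_iff hmem).2 ⟨qr, hsub hqr, hev⟩
  · intro h
    obtain ⟨c, hc, hb, hfr⟩ := hf
    have hqr : (c.1, regIdx K c.2) ∈ Letter K P₁ (ρ f) :=
      hsub ⟨c, hc, hb, hfr, rfl⟩
    have hev : Even (regIdx K c.2) := by
      obtain ⟨c₁, hc₁, hb₁, hfr₁, heq⟩ := hqr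
      have : regIdx K c.2 = regIdx K c₁.2 := congrArg Prod.snd heq
      rw [this]
      exact (regIdx_even_iff hb₁).2 (by rw [hfr₁, h])
    rw [← hfr]
    exact (regIdx_even_iff hb).1 hev

/-- Two concretizations of the same abstract word are mutually similar. -/
lemma sim_of_abs {K : ℕ} {P₁ P₂ : Set (Q × NNReal)} {W : List (Set (Q × ℕ))}
    (h1 : IsAbstraction K P₁ W) (h2 : IsAbstraction K P₂ W) : Sim K P₂ P₁ := by
  obtain ⟨fs₁, hs₁, hm₁, hl₁, hg₁⟩ := h1
  obtain ⟨fs₂, hs₂, hm₂, hl₂, hg₂⟩ := h2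
  have hlen : fs₂.length = fs₁.length := by rw [← hl₂, hl₁]
  -- for each index, the two letters agree
  have hset : ∀ i : Fin fs₂.length,
      {qr : Q × ℕ | ∃ c ∈ P₂, Int.fract (c.2:ℝ) = fs₂.get i ∧ qr = (c.1, regIdx K c.2)} =
      {qr : Q × ℕ | ∃ c ∈ P₁, Int.fract (c.2:ℝ) = fs₁.get (Fin.cast hlen i) ∧
        qr = (c.1, regIdx K c.2)} := by
    intro i
    have hw : (i : ℕ) < W.length := by rw [hl₂]; exact i.2
    have e1 := hg₂ i hw i.2
    have e2 := hg₁ i hw (by rw [← hlen]; exact i.2)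
    exact e1.symm ▸ e2.symm ▸ rfl
  have hidx : ∀ c ∈ P₂, ∃ i : Fin fs₂.length, fs₂.get i = Int.fract (c.2:ℝ) := by
    intro c hc
    have : Int.fract (c.2:ℝ) ∈ fs₂ := (hm₂ _).2 ⟨c, hc, rfl⟩
    obtain ⟨i, hi⟩ := List.mem_iff_get.1 this
    exact ⟨i, hi⟩
  constructor
  · rintro q ⟨v, hv, hgt⟩
    obtain ⟨i, hi⟩ := hidx (q, v) hv
    have : ((q, v).1, regIdx K (q, v).2) ∈
        {qr : Q × ℕ | ∃ c ∈ P₂, Int.fract (c.2:ℝ) = fs₂.get i ∧ qr = (c.1, regIdx K c.2)} :=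
      ⟨(q, v), hv, hi.symm, rfl⟩
    rw [hset i] at this
    obtain ⟨c₁, hc₁, hfr₁, heq⟩ := this
    have hq : q = c₁.1 := congrArg Prod.fst heq
    have hr : regIdx K v = regIdx K c₁.2 := congrArg Prod.snd heq
    rw [regIdx_of_gt hgt] at hr
    have : ¬ ((c₁.2:ℝ) ≤ (K:ℝ)) := by
      intro hle
      have := regIdx_le_iff.2 hle
      omega
    push_neg at this
    exact ⟨c₁.2, by rw [hq]; exact (by simpa using hc₁), this⟩
  · classical
    refine ⟨fun f => if h : ∃ i : Fin fs₂.length, fs₂.get i = f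
      then fs₁.get (Fin.cast hlen h.choose) else 0, ?_, ?_⟩
    · intro f hf f' hf' hlt
      obtain ⟨c, hc, hcb, hcf⟩ := hf
      obtain ⟨c', hc', hcb', hcf'⟩ := hf'
      have he : ∃ i : Fin fs₂.length, fs₂.get i = f := by
        obtain ⟨i, hi⟩ := hidx c hc; exact ⟨i, by rw [hi, hcf]⟩
      have he' : ∃ i : Fin fs₂.length, fs₂.get i = f' := by
        obtain ⟨i, hi⟩ := hidx c' hc'; exact ⟨i, by rw [hi, hcf']⟩
      simp only [dif_pos he, dif_pos he']
      have hii : he.choose < he'.choose := by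
        have := hs₂.sortedLT.strictMono_get.lt_iff_lt
          (a := he.choose) (b := he'.choose)
        rw [he.choose_spec, he'.choose_spec] at this
        exact this.1 hlt
      exact hs₁.sortedLT.strictMono_get hii
    · intro f hf
      have hfmem := hf
      obtain ⟨c, hc, hcb, hcf⟩ := hf
      have he : ∃ i : Fin fs₂.length, fs₂.get i = f := by
        obtain ⟨i, hi⟩ := hidx c hc; exact ⟨i, by rw [hi, hcf]⟩
      simp only [dif_pos he]
      set i := he.choose with hidef
      have hi : fs₂.get i = f := he.choose_spec
      -- transport an atom across the common letter
      have key : ∀ qr ∈ Letter K P₂ f, qr ∈ Letter K P₁ (fs₁.get (Fin.cast hlen i)) := by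
        rintro qr ⟨c', hc', hcb', hcf', rfl⟩
        have : ((c'.1, regIdx K c'.2) : Q × ℕ) ∈
            {qr : Q × ℕ | ∃ c ∈ P₂, Int.fract (c.2:ℝ) = fs₂.get i ∧
              qr = (c.1, regIdx K c.2)} := ⟨c', hc', by rw [hi, hcf'], rfl⟩
        rw [hset i] at this
        obtain ⟨c₁, hc₁, hfr₁, heq⟩ := this
        have hr : regIdx K c'.2 = regIdx K c₁.2 := congrArg Prod.snd heq
        have hb₁ : (c₁.2:ℝ) ≤ (K:ℝ) := by
          rw [← regIdx_le_iff, ← hr]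
          exact regIdx_le_iff.2 hcb'
        exact ⟨c₁, hc₁, hb₁, hfr₁, heq⟩
      constructor
      · obtain ⟨c₁, hc₁, hb₁, hfr₁, _⟩ := key (c.1, regIdx K c.2) ⟨c, hc, hcb, hcf, rfl⟩
        exact ⟨c₁, hc₁, hb₁, hfr₁⟩
      · exact key

end Simdef

/-! ### Abstractions: existence, finiteness, badness -/

section Abs

variable {A Q : Type}

lemma abs_exists {K : ℕ} {P : Set (Q × NNReal)} (hP : P.Finite) :
    ∃ W, IsAbstraction K P W := by
  classical
  set S : Finset ℝ := (hP.image (fun c => Int.fract (c.2:ℝ))).toFinset with hS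
  set fs : List ℝ := S.sort (· ≤ ·) with hfs
  refine ⟨fs.map (fun f =>
    {qr | ∃ c ∈ P, Int.fract (c.2:ℝ) = f ∧ qr = (c.1, regIdx K c.2)}),
    fs, (Finset.sortedLT_sort S).pairwise, ?_, by simp, ?_⟩
  · intro f
    rw [hfs, Finset.mem_sort, hS, Set.Finite.mem_toFinset]
    constructor
    · rintro ⟨c, hc, hf⟩
      exact ⟨c, hc, hf⟩
    · rintro ⟨c, hc, hf⟩
      exact ⟨c, hc, hf⟩
  · intro i hw hi
    rw [List.get_eq_getElem, List.getElem_map]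
    rfl

lemma bddF_finite_of_abs {K : ℕ} {P : Set (Q × NNReal)} {W : List (Set (Q × ℕ))}
    (h : IsAbstraction K P W) : (BddF K P).Finite := by
  obtain ⟨fs, _, hm, _, _⟩ := h
  refine Set.Finite.subset fs.finite_toSet ?_
  rintro f ⟨c, hc, _, hf⟩
  exact (hm f).2 ⟨c, hc, hf⟩

lemma bad_of_badW {K : ℕ} {P : Set (Q × NNReal)} {W : List (Set (Q × ℕ))} {F : Set Q}
    (h : IsAbstraction K P W) (hb : BadW F W) : ∀ c ∈ P, c.1 ∈ F := by
  obtain ⟨fs, _, hm, hl, hg⟩ := h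
  intro c hc
  have hmem : Int.fract (c.2:ℝ) ∈ fs := (hm _).2 ⟨c, hc, rfl⟩
  obtain ⟨i, hi⟩ := List.mem_iff_get.1 hmem
  have hw : (i:ℕ) < W.length := by rw [hl]; exact i.2
  have hget := hg i hw i.2
  have : ((c.1, regIdx K c.2) : Q × ℕ) ∈ W.get ⟨i, hw⟩ := by
    rw [hget]
    exact ⟨c, hc, by rw [← hi], rfl⟩
  exact hb _ (W.get_mem _) _ this

lemma badW_of_bad {K : ℕ} {P : Set (Q × NNReal)} {W : List (Set (Q × ℕ))} {F : Set Q}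
    (h : IsAbstraction K P W) (hb : ∀ c ∈ P, c.1 ∈ F) : BadW F W := by
  obtain ⟨fs, _, hm, hl, hg⟩ := h
  intro s hs qr hqr
  obtain ⟨i, hi⟩ := List.mem_iff_get.1 hs
  have hi2 : (i:ℕ) < fs.length := by rw [← hl]; exact i.2
  rw [← hi] at hqr
  rw [show W.get i = W.get ⟨i.1, i.2⟩ from rfl, hg i.1 i.2 hi2] at hqr
  obtain ⟨c, hc, _, rfl⟩ := hqr
  exact hb c hc

lemma le_foldr_max {X : Type} {l : List X} (g : X → ℕ) {x : X} (h : x ∈ l) :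
    g x ≤ (l.map g).foldr max 0 := by
  induction l with
  | nil => cases h
  | cons y l ih =>
    simp only [List.map_cons, List.foldr_cons]
    rcases List.mem_cons.1 h with h' | h'
    · rw [h']; exact le_max_left _ _
    · exact le_trans (ih h') (le_max_right _ _)

lemma maxConst_le_cmax [Fintype A] [Fintype Q] (M : ATA1 A Q) (q : Q) (a : A) :
    ∀ gb ∈ M.trans q a, gb.1.maxConst ≤ M.cmax := by
  intro gb hgb
  calc gb.1.maxConst ≤ ((M.trans q a).map fun gb => gb.1.maxConst).foldr max 0 :=
        le_foldr_max (fun gb => gb.1.maxConst) hgb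
    _ ≤ Finset.univ.sup fun a : A =>
        ((M.trans q a).map fun gb => gb.1.maxConst).foldr max 0 :=
        Finset.le_sup (f := fun a : A =>
          ((M.trans q a).map fun gb => gb.1.maxConst).foldr max 0) (Finset.mem_univ a)
    _ ≤ M.cmax :=
        Finset.le_sup (f := fun q : Q => Finset.univ.sup fun a : A =>
          ((M.trans q a).map fun gb => gb.1.maxConst).foldr max 0) (Finset.mem_univ q)

lemma step_extract (M : ATA1 A Q) {P : Set (Q × NNReal)} {a : A} {t : NNReal}
    {w : TimedWord A} (h : ∀ c ∈ P, M.AccFrom ((a, t) :: w) c.1 c.2) :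
    ∃ P', M.Tstep a t P P' ∧ (∀ c' ∈ P', M.AccFrom w c'.1 c'.2) ∧
      (P.Finite → P'.Finite) := by
  classical
  have h' : ∀ c : Q × NNReal, c ∈ P → ∃ d : List (Q × Bool),
      (∃ gb ∈ M.trans c.1 a, gb.1.sat (fun _ => c.2 + t) ∧ d ∈ gb.2) ∧
      ∀ qb ∈ d, M.AccFrom w qb.1 (if qb.2 then 0 else c.2 + t) := by
    intro c hc
    have hc' := h c hc
    rw [show ((a, t) :: w : TimedWord A) = (a, t) :: w from rfl] at hc'
    simp only [ATA1.AccFrom] at hc'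
    obtain ⟨gb, hgb, hsat, d, hd, hacc⟩ := hc'
    exact ⟨d, ⟨gb, hgb, hsat, hd⟩, hacc⟩
  choose! d hd1 hd2 using h'
  refine ⟨⋃ c ∈ P, {c' | ∃ qb ∈ d c, c' = (qb.1, if qb.2 then 0 else c.2 + t)},
    ⟨d, hd1, rfl⟩, ?_, ?_⟩
  · rintro c' hc'
    simp only [Set.mem_iUnion] at hc'
    obtain ⟨c, hc, qb, hqb, rfl⟩ := hc'
    exact hd2 c hc qb hqb
  · intro hP
    apply Set.Finite.biUnion hP
    intro c _
    refine Set.Finite.subset (Set.Finite.image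
      (fun qb : Q × Bool => ((qb.1, if qb.2 then 0 else c.2 + t) : Q × NNReal))
      (d c).finite_toSet) ?_
    rintro c' ⟨qb, hqb, rfl⟩
    exact ⟨qb, hqb, rfl⟩

end Abs

/-! ### Shifting helpers -/

section Shift

lemma fract_shift_cancel {f δ : ℝ} (h0 : 0 ≤ f) (h1 : f < 1) :
    Int.fract (Int.fract (f + δ) - δ) = f := by
  have : Int.fract (f + δ) - δ = f - (⌊f + δ⌋ : ℤ) := by
    rw [Int.fract]; ring
  rw [this, Int.fract_sub_intCast, Int.fract_eq_self.2 ⟨h0, h1⟩]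

lemma fract_shift_inj {f f' δ : ℝ} (h0 : 0 ≤ f) (h1 : f < 1) (h0' : 0 ≤ f') (h1' : f' < 1)
    (h : Int.fract (f + δ) = Int.fract (f' + δ)) : f = f' := by
  have := fract_shift_cancel h0 h1 (δ := δ)
  rw [h, fract_shift_cancel h0' h1'] at this
  exact this.symm

lemma regIdx_shift {K m s : ℕ} {v w : NNReal} {x y : ℝ}
    (hx0 : 0 ≤ x) (hx2 : x < 2) (hy0 : 0 ≤ y) (hy2 : y < 2)
    (hv : (v:ℝ) = (m:ℝ) + (s:ℝ) + x) (hw : (w:ℝ) = (m:ℝ) + (s:ℝ) + y)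
    (hwrap : 1 ≤ x ↔ 1 ≤ y) (hzz : Int.fract x = 0 ↔ Int.fract y = 0) :
    regIdx K v = regIdx K w ∧ Int.fract (v:ℝ) = Int.fract x ∧
      Int.fract (w:ℝ) = Int.fract y := by
  by_cases h1 : 1 ≤ x
  · have h1' : 1 ≤ y := hwrap.1 h1
    have hfx : Int.fract x = x - 1 := fract_of_ge_one h1 hx2
    have hfy : Int.fract y = y - 1 := fract_of_ge_one h1' hy2
    have hv' : (v:ℝ) = ((m + s + 1 : ℕ):ℝ) + (x - 1) := by push_cast; linarith
    have hw' : (w:ℝ) = ((m + s + 1 : ℕ):ℝ) + (y - 1) := by push_cast; linarith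
    rw [hfx, hfy] at hzz
    refine ⟨regIdx_congr hv' hw' (by linarith) (by linarith) (by linarith) (by linarith)
      hzz, ?_, ?_⟩
    · rw [hv', add_comm, Int.fract_add_natCast, Int.fract_eq_self.2 ⟨by linarith, by linarith⟩,
        hfx]
    · rw [hw', add_comm, Int.fract_add_natCast, Int.fract_eq_self.2 ⟨by linarith, by linarith⟩,
        hfy]
  · have h1' : ¬ 1 ≤ y := fun h => h1 (hwrap.2 h)
    push_neg at h1 h1'
    have hfx : Int.fract x = x := fract_of_lt_one hx0 h1
    have hfy : Int.fract y = y := fract_of_lt_one hy0 h1'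
    have hv' : (v:ℝ) = ((m + s : ℕ):ℝ) + x := by push_cast; linarith
    have hw' : (w:ℝ) = ((m + s : ℕ):ℝ) + y := by push_cast; linarith
    refine ⟨regIdx_congr hv' hw' hx0 h1 hy0 h1' (by rw [hfx, hfy] at hzz; exact hzz),
      ?_, ?_⟩
    · rw [hv', add_comm, Int.fract_add_natCast, Int.fract_eq_self.2 ⟨hx0, h1⟩]
    · rw [hw', add_comm, Int.fract_add_natCast, Int.fract_eq_self.2 ⟨hy0, h1'⟩]

/-- The order of shifted fractional parts is reproduced. -/
lemma fract_shift_order {f f' δ θ rf rf' : ℝ}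
    (hf0 : 0 ≤ f) (hf1 : f < 1) (hf0' : 0 ≤ f') (hf1' : f' < 1)
    (hr0 : 0 ≤ rf) (hr1 : rf < 1) (hr0' : 0 ≤ rf') (hr1' : rf' < 1)
    (hθ0 : 0 ≤ θ) (hθ1 : θ < 1) (hδ0 : 0 ≤ δ) (hδ1 : δ ≤ 1)
    (hlt : f < f') (hrlt : rf < rf')
    (hwrap : 1 ≤ f + δ ↔ 1 ≤ rf + θ) (hwrap' : 1 ≤ f' + δ ↔ 1 ≤ rf' + θ) :
    (Int.fract (f + δ) < Int.fract (f' + δ)) ↔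
    (Int.fract (rf + θ) < Int.fract (rf' + θ)) := by
  by_cases h2 : 1 ≤ f' + δ
  · by_cases h1 : 1 ≤ f + δ
    · -- both wrap
      rw [fract_of_ge_one h1 (by linarith), fract_of_ge_one h2 (by linarith),
        fract_of_ge_one (hwrap.1 h1) (by linarith), fract_of_ge_one (hwrap'.1 h2) (by linarith)]
      constructor <;> intro <;> linarith
    · -- only f' wraps : both sides false
      push_neg at h1
      have h1r : rf + θ < 1 := by
        by_contra hc; push_neg at hc; exact absurd (hwrap.2 hc) (by linarith)
      rw [fract_of_lt_one (by linarith) h1, fract_of_ge_one h2 (by linarith),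
        fract_of_lt_one (by linarith) h1r, fract_of_ge_one (hwrap'.1 h2) (by linarith)]
      constructor <;> intro <;> linarith
  · -- none wraps
    push_neg at h2
    have h1 : f + δ < 1 := by linarith
    have h2r : rf' + θ < 1 := by
      by_contra hc; push_neg at hc; exact absurd (hwrap'.2 hc) (by linarith)
    have h1r : rf + θ < 1 := by linarith
    rw [fract_of_lt_one (by linarith) h1, fract_of_lt_one (by linarith) h2,
      fract_of_lt_one (by linarith) h1r, fract_of_lt_one (by linarith) h2r]
    constructor <;> intro <;> linarith

end Shift

/-! ### The transfer lemma -/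

section Transfer

variable {A Q : Type} [Fintype A] [Fintype Q]

lemma transfer (M : ATA1 A Q) (w : TimedWord A) :
    ∀ P₁ P₂ : Set (Q × NNReal), (BddF M.cmax P₂).Finite → Sim M.cmax P₂ P₁ →
      (∀ c ∈ P₁, M.AccFrom w c.1 c.2) →
      ∃ w₂ : TimedWord A, ∀ c ∈ P₂, M.AccFrom w₂ c.1 c.2 := by
  induction w with
  | nil =>
    intro P₁ P₂ _ hsim hacc
    refine ⟨[], fun c hc => ?_⟩
    obtain ⟨hub, ρ, hmono, hρ⟩ := hsim
    show c.1 ∈ M.accept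
    by_cases hb : (c.2:ℝ) ≤ (M.cmax:ℝ)
    · obtain ⟨c₁, hc₁, _, _, heq⟩ := (hρ _ ⟨c, hc, hb, rfl⟩).2 ⟨c, hc, hb, rfl, rfl⟩
      rw [Prod.mk.injEq] at heq
      rw [heq.1]
      exact hacc c₁ hc₁
    · push_neg at hb
      obtain ⟨v₁, hv₁, _⟩ := hub ⟨c.2, by rw [Prod.mk.eta]; exact hc, hb⟩
      exact hacc (c.1, v₁) hv₁
  | cons at₁ w ih =>
    obtain ⟨a, t₁⟩ := at₁
    intro P₁ P₂ hfin hsim hacc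
    classical
    haveI : Inhabited (ClockConstraint Unit) := ⟨.lt () 0⟩
    obtain ⟨hub, ρ, hmono, hρ⟩ := hsim
    set K := M.cmax with hKdef
    -- extract transition data on `P₁`
    have h' : ∀ c : Q × NNReal, c ∈ P₁ →
        ∃ gbd : (ClockConstraint Unit × List (List (Q × Bool))) × List (Q × Bool),
        gbd.1 ∈ M.trans c.1 a ∧ gbd.1.1.sat (fun _ => c.2 + t₁) ∧ gbd.2 ∈ gbd.1.2 ∧
        ∀ qb ∈ gbd.2, M.AccFrom w qb.1 (if qb.2 then 0 else c.2 + t₁) := by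
      intro c hc
      have hc' := hacc c hc
      simp only [ATA1.AccFrom] at hc'
      obtain ⟨gb, hgb, hsat, d, hd, hacc'⟩ := hc'
      exact ⟨(gb, d), hgb, hsat, hd, hacc'⟩
    choose! gbd hgb hsat hd haccd using h'
    -- the successor of `P₁`
    set P₁' : Set (Q × NNReal) :=
      {x | ∃ c ∈ P₁, ∃ qb ∈ (gbd c).2, x = (qb.1, if qb.2 then 0 else c.2 + t₁)}
      with hP₁'def
    have haccP₁' : ∀ x ∈ P₁', M.AccFrom w x.1 x.2 := by
      rintro x ⟨c, hc, qb, hqb, rfl⟩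
      exact haccd c hc qb hqb
    -- matching of configurations of `P₂` with configurations of `P₁`
    have hmatch : ∀ c : Q × NNReal, c ∈ P₂ → ∃ c₁, c₁ ∈ P₁ ∧ c₁.1 = c.1 ∧
        regIdx K c₁.2 = regIdx K c.2 ∧
        ((c.2:ℝ) ≤ (K:ℝ) → Int.fract (c₁.2:ℝ) = ρ (Int.fract (c.2:ℝ)) ∧
          (c₁.2:ℝ) ≤ (K:ℝ)) := by
      intro c hc
      by_cases hb : (c.2:ℝ) ≤ (K:ℝ)
      · obtain ⟨c₁, hc₁, hb₁, hfr₁, heq⟩ := (hρ _ ⟨c, hc, hb, rfl⟩).2 ⟨c, hc, hb, rfl, rfl⟩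
        rw [Prod.mk.injEq] at heq
        exact ⟨c₁, hc₁, heq.1.symm, heq.2.symm, fun _ => ⟨hfr₁, hb₁⟩⟩
      · push_neg at hb
        obtain ⟨v₁, hv₁, hv₁gt⟩ := hub ⟨c.2, by rw [Prod.mk.eta]; exact hc, hb⟩
        exact ⟨(c.1, v₁), hv₁, rfl, by
          show regIdx K v₁ = regIdx K c.2
          rw [regIdx_of_gt hv₁gt, regIdx_of_gt hb], fun h => absurd h (not_le.2 hb)⟩
    choose! mc hmc1 hmc2 hmc3 hmc4 using hmatch
    -- construction of the matching delay
    set θ : ℝ := Int.fract (t₁:ℝ) with hθdef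
    set s : ℕ := ⌊(t₁:ℝ)⌋₊ with hsdef
    have hts : (t₁:ℝ) = (s:ℝ) + θ := nnreal_eq_floor_add_fract t₁
    have hθ0 : 0 ≤ θ := Int.fract_nonneg _
    have hθ1 : θ < 1 := Int.fract_lt_one _
    obtain ⟨δ, hδ0, hδ1, hδ⟩ := delta_exists hfin.toFinset ρ θ hθ0 hθ1
      (fun f hf => BddF_mem_Ico (hfin.mem_toFinset.1 hf))
      (fun f hf => BddF_mem_Ico ((hρ f (hfin.mem_toFinset.1 hf)).1))
      (fun f hf f' hf' => hmono f (hfin.mem_toFinset.1 hf) f' (hfin.mem_toFinset.1 hf'))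
      (fun f hf => sim_zero_iff hρ (hfin.mem_toFinset.1 hf))
    have hδ' : ∀ f ∈ BddF K P₂, (1 ≤ f + δ ↔ 1 ≤ ρ f + θ) ∧
        (Int.fract (f + δ) = 0 ↔ Int.fract (ρ f + θ) = 0) :=
      fun f hf => hδ f (hfin.mem_toFinset.2 hf)
    set t₂ : NNReal := Real.toNNReal ((s:ℝ) + δ) with ht₂def
    have ht₂ : (t₂:ℝ) = (s:ℝ) + δ := Real.coe_toNNReal _ (by positivity)
    -- region correspondence of time-elapsed configurations
    have hbddmem : ∀ c : Q × NNReal, c ∈ P₂ → (c.2:ℝ) ≤ (K:ℝ) →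
        Int.fract (c.2:ℝ) ∈ BddF K P₂ := fun c hc hb => ⟨c, hc, hb, rfl⟩
    have hreg : ∀ c : Q × NNReal, c ∈ P₂ →
        regIdx K (c.2 + t₂) = regIdx K ((mc c).2 + t₁) ∧
        ((c.2:ℝ) ≤ (K:ℝ) →
          Int.fract ((c.2 + t₂ : NNReal):ℝ) = Int.fract (Int.fract (c.2:ℝ) + δ) ∧
          Int.fract (((mc c).2 + t₁ : NNReal):ℝ) = Int.fract (ρ (Int.fract (c.2:ℝ)) + θ)) := by
      intro c hc
      by_cases hb : (c.2:ℝ) ≤ (K:ℝ)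
      · -- bounded case
        set f : ℝ := Int.fract (c.2:ℝ) with hfdef
        obtain ⟨hfr₁, hb₁⟩ := hmc4 c hc hb
        obtain ⟨hfl, _⟩ := regIdx_bounded_data hb₁ hb (hmc3 c hc)
        set m : ℕ := ⌊(c.2:ℝ)⌋₊ with hmdef
        have hc2 : (c.2:ℝ) = (m:ℝ) + f := nnreal_eq_floor_add_fract c.2
        have hc1' : ((mc c).2:ℝ) = (m:ℝ) + ρ f := by
          have := nnreal_eq_floor_add_fract (mc c).2
          rw [hfl, hfr₁] at this
          exact this
        have hfm : f ∈ BddF K P₂ := hbddmem c hc hb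
        obtain ⟨hf0, hf1⟩ := BddF_mem_Ico hfm
        obtain ⟨hr0, hr1⟩ := BddF_mem_Ico (hρ f hfm).1
        obtain ⟨hw1, hw2⟩ := hδ' f hfm
        have hsh := regIdx_shift (K := K) (m := m) (s := s)
          (v := c.2 + t₂) (w := (mc c).2 + t₁) (x := f + δ) (y := ρ f + θ)
          (by linarith) (by linarith) (by linarith) (by linarith)
          (by push_cast; rw [hc2, ht₂]; ring) (by push_cast; rw [hc1', hts]; ring)
          hw1 hw2
        exact ⟨hsh.1, fun _ => ⟨hsh.2.1, hsh.2.2⟩⟩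
      · push_neg at hb
        have hgt₂ : (K:ℝ) < ((c.2 + t₂ : NNReal):ℝ) := by
          push_cast; have := t₂.coe_nonneg; linarith
        have hmgt : (K:ℝ) < ((mc c).2:ℝ) := by
          have h3 := hmc3 c hc
          rw [regIdx_of_gt hb] at h3
          by_contra hle
          push_neg at hle
          have := regIdx_le_iff.2 hle
          omega
        have hgt₁ : (K:ℝ) < (((mc c).2 + t₁ : NNReal):ℝ) := by
          push_cast; have := t₁.coe_nonneg; linarith
        exact ⟨by rw [regIdx_of_gt hgt₂, regIdx_of_gt hgt₁],
          fun h => absurd h (not_le.2 hb)⟩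
    -- the successor of `P₂`
    set P₂' : Set (Q × NNReal) :=
      {x | ∃ c ∈ P₂, ∃ qb ∈ (gbd (mc c)).2, x = (qb.1, if qb.2 then 0 else c.2 + t₂)}
      with hP₂'def
    -- bounded members of `P₂'`
    have hmem2' : ∀ x : Q × NNReal, x ∈ P₂' → (x.2:ℝ) ≤ (K:ℝ) →
        ∃ c ∈ P₂, ∃ qb ∈ (gbd (mc c)).2, x = (qb.1, if qb.2 then 0 else c.2 + t₂) ∧
        (qb.2 = true ∨ (qb.2 = false ∧ (c.2:ℝ) ≤ (K:ℝ))) := by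
      rintro x ⟨c, hc, qb, hqb, rfl⟩ hxb
      refine ⟨c, hc, qb, hqb, rfl, ?_⟩
      by_cases h2 : qb.2
      · exact Or.inl h2
      · refine Or.inr ⟨by simpa using h2, ?_⟩
        simp only [if_neg h2] at hxb
        by_contra hcb
        push_neg at hcb
        have : (K:ℝ) < ((c.2 + t₂ : NNReal):ℝ) := by
          push_cast; have := t₂.coe_nonneg; linarith
        linarith
    -- the new order-preserving map
    set ρ' : ℝ → ℝ := fun g => if g = 0 then 0
      else Int.fract (ρ (Int.fract (g - δ)) + θ) with hρ'def
    have hρ'eval : ∀ f ∈ BddF K P₂,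
        ρ' (Int.fract (f + δ)) = Int.fract (ρ f + θ) := by
      intro f hf
      obtain ⟨hf0, hf1⟩ := BddF_mem_Ico hf
      by_cases hz : Int.fract (f + δ) = 0
      · rw [hρ'def]
        simp only [hz, if_pos rfl]
        exact ((hδ' f hf).2.1 hz).symm
      · rw [hρ'def]
        simp only [if_neg hz]
        rw [fract_shift_cancel hf0 hf1]
    -- `P₂'` simulates into `P₁'`
    have hcorr : ∀ x : Q × NNReal, x ∈ P₂' → (x.2:ℝ) ≤ (K:ℝ) →
        ∃ y : Q × NNReal, y ∈ P₁' ∧ (y.2:ℝ) ≤ (K:ℝ) ∧ y.1 = x.1 ∧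
          regIdx K y.2 = regIdx K x.2 ∧
          Int.fract (y.2:ℝ) = ρ' (Int.fract (x.2:ℝ)) := by
      intro x hx hxb
      obtain ⟨c, hc, qb, hqb, rfl, hcase⟩ := hmem2' x hx hxb
      rcases hcase with h2 | ⟨h2, hcb⟩
      · -- reset
        refine ⟨(qb.1, 0), ⟨mc c, hmc1 c hc, qb, hqb, by rw [h2]; simp⟩, ?_, rfl, ?_, ?_⟩
        · simp
        · simp only [h2, if_pos]
        · simp only [h2, if_pos]
          norm_num
          rw [hρ'def]
          simp
      · -- kept
        obtain ⟨hregc, hfrc⟩ := hreg c hc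
        obtain ⟨hfr2, hfr1⟩ := hfrc hcb
        refine ⟨(qb.1, (mc c).2 + t₁), ⟨mc c, hmc1 c hc, qb, hqb, by rw [h2]; simp⟩,
          ?_, rfl, ?_, ?_⟩
        · rw [← regIdx_le_iff, ← hregc, regIdx_le_iff]
          simpa [h2] using hxb
        · simp only [h2, if_neg Bool.false_ne_true]
          exact hregc.symm
        · simp only [h2, if_neg Bool.false_ne_true]
          rw [hfr1, hfr2, hρ'eval _ (hbddmem c hc hcb)]
    have hsim' : Sim K P₂' P₁' := by
      constructor
      · rintro q ⟨v, hv, hgt⟩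
        obtain ⟨c, hc, qb, hqb, heq⟩ := hv
        rw [Prod.mk.injEq] at heq
        obtain ⟨hq, hv2⟩ := heq
        by_cases h2 : qb.2
        · rw [hv2, if_pos h2] at hgt
          simp only [NNReal.coe_zero] at hgt
          exact absurd hgt (not_lt.2 (by positivity))
        · rw [hv2, if_neg h2] at hgt
          have hregc := (hreg c hc).1
          rw [regIdx_of_gt hgt] at hregc
          have hgt₁ : (K:ℝ) < (((mc c).2 + t₁ : NNReal):ℝ) := by
            by_contra hle
            push_neg at hle
            have := regIdx_le_iff.2 hle
            omega
          refine ⟨(mc c).2 + t₁, ?_, hgt₁⟩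
          rw [hq]
          exact ⟨mc c, hmc1 c hc, qb, hqb, by rw [if_neg h2]⟩
      · refine ⟨ρ', ?_, ?_⟩
        · -- strict monotonicity
          intro g hg g' hg' hlt
          obtain ⟨x, hx, hxb, hxf⟩ := hg
          obtain ⟨x', hx', hxb', hxf'⟩ := hg'
          -- characterize g and g'
          have hchar : ∀ y : Q × NNReal, y ∈ P₂' → (y.2:ℝ) ≤ (K:ℝ) →
              Int.fract (y.2:ℝ) = 0 ∨
              ∃ f ∈ BddF K P₂, Int.fract (y.2:ℝ) = Int.fract (f + δ) := by
            intro y hy hyb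
            obtain ⟨c, hc, qb, hqb, rfl, hcase⟩ := hmem2' y hy hyb
            rcases hcase with h2 | ⟨h2, hcb⟩
            · left; simp [h2]
            · right
              exact ⟨Int.fract (c.2:ℝ), hbddmem c hc hcb, by
                simp only [h2, if_neg Bool.false_ne_true]
                exact ((hreg c hc).2 hcb).1⟩
          have hg0 : 0 ≤ g := hxf ▸ Int.fract_nonneg _
          rcases hchar x' hx' hxb' with h0' | ⟨f', hf', hff'⟩
          · exfalso
            rw [hxf'] at h0'
            rw [h0'] at hlt
            linarith
          · rw [hxf'] at hff'
            rcases hchar x hx hxb with h0 | ⟨f, hf, hff⟩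
            · -- g = 0
              rw [hxf] at h0
              rw [h0]
              have hz1 : ρ' 0 = 0 := by rw [hρ'def]; simp
              rw [hz1, hff', hρ'eval f' hf']
              have hne : Int.fract (f' + δ) ≠ 0 := by
                rw [← hff']; rw [h0] at hlt; exact ne_of_gt hlt
              have : Int.fract (ρ f' + θ) ≠ 0 := fun h => hne ((hδ' f' hf').2.2 h)
              have h0le : 0 ≤ Int.fract (ρ f' + θ) := Int.fract_nonneg _
              exact lt_of_le_of_ne h0le (Ne.symm this)
            · rw [hxf] at hff
              rw [hff, hff', hρ'eval f hf, hρ'eval f' hf']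
              rw [hff, hff'] at hlt
              have hne : f ≠ f' := by
                intro h; rw [h] at hlt; exact lt_irrefl _ hlt
              obtain ⟨hf0, hf1⟩ := BddF_mem_Ico hf
              obtain ⟨hf0', hf1'⟩ := BddF_mem_Ico hf'
              obtain ⟨hr0, hr1⟩ := BddF_mem_Ico (hρ f hf).1
              obtain ⟨hr0', hr1'⟩ := BddF_mem_Ico (hρ f' hf').1
              rcases lt_or_gt_of_ne hne with hlt' | hlt'
              · exact (fract_shift_order hf0 hf1 hf0' hf1' hr0 hr1 hr0' hr1'
                  hθ0 hθ1 hδ0 hδ1 hlt' (hmono f hf f' hf' hlt')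
                  ((hδ' f hf).1) ((hδ' f' hf').1)).1 hlt
              · have hiff := (fract_shift_order hf0' hf1' hf0 hf1 hr0' hr1' hr0 hr1
                  hθ0 hθ1 hδ0 hδ1 hlt' (hmono f' hf' f hf hlt')
                  ((hδ' f' hf').1) ((hδ' f hf).1))
                have hnot2 : ¬ (Int.fract (ρ f' + θ) < Int.fract (ρ f + θ)) := by
                  intro hcon
                  have := hiff.2 hcon
                  linarith
                push_neg at hnot2
                rcases lt_or_eq_of_le hnot2 with h | h
                · exact h
                · exfalso
                  have heq2 : ρ f = ρ f' := fract_shift_inj hr0 hr1 hr0' hr1' h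
                  have := hmono f' hf' f hf hlt'
                  linarith
        · -- letter inclusion
          intro g hg
          constructor
          · obtain ⟨x, hx, hxb, hxf⟩ := hg
            obtain ⟨y, hy, hyb, _, _, hyf⟩ := hcorr x hx hxb
            exact ⟨y, hy, hyb, by rw [hyf, hxf]⟩
          · rintro qr ⟨x, hx, hxb, hxf, rfl⟩
            obtain ⟨y, hy, hyb, hyq, hyr, hyf⟩ := hcorr x hx hxb
            exact ⟨y, hy, hyb, by rw [hyf, hxf], by rw [hyq, hyr]⟩
    -- finiteness of the new bounded fractional parts
    have hfin' : (BddF K P₂').Finite := by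
      have hsub : BddF K P₂' ⊆ insert (0:ℝ)
          ((fun f => Int.fract (f + δ)) '' (BddF K P₂)) := by
        rintro g ⟨x, hx, hxb, hxf⟩
        obtain ⟨c, hc, qb, hqb, rfl, hcase⟩ := hmem2' x hx hxb
        rcases hcase with h2 | ⟨h2, hcb⟩
        · left; rw [← hxf]; simp [h2]
        · right
          refine ⟨Int.fract (c.2:ℝ), hbddmem c hc hcb, ?_⟩
          rw [← hxf]
          simp only [h2, if_neg Bool.false_ne_true]
          exact (((hreg c hc).2 hcb).1).symm
      exact Set.Finite.subset (Set.Finite.insert _ (Set.Finite.image _ hfin)) hsub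
    -- apply the induction hypothesis
    obtain ⟨w₂, hw₂⟩ := ih P₁' P₂' hfin' hsim' haccP₁'
    refine ⟨(a, t₂) :: w₂, fun c hc => ?_⟩
    simp only [ATA1.AccFrom]
    refine ⟨(gbd (mc c)).1, ?_, ?_, (gbd (mc c)).2, hd (mc c) (hmc1 c hc), ?_⟩
    · have := hgb (mc c) (hmc1 c hc)
      rw [hmc2 c hc] at this
      exact this
    · exact (sat_congr (hreg c hc).1 _ (maxConst_le_cmax M (mc c).1 a _
        (hgb (mc c) (hmc1 c hc)))).2 (hsat (mc c) (hmc1 c hc))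
    · intro qb hqb
      exact hw₂ (qb.1, if qb.2 then 0 else c.2 + t₂) ⟨c, hc, qb, hqb, rfl⟩

end Transfer

/-! ### The two directions and the main theorem -/

section MainProof

variable {A Q : Type} [Fintype A] [Fintype Q]

lemma fwd (M : ATA1 A Q) (w : TimedWord A) :
    ∀ P : Set (Q × NNReal), P.Finite → (∀ c ∈ P, M.AccFrom w c.1 c.2) →
      ∀ W, IsAbstraction M.cmax P W →
      ∃ W', Relation.ReflTransGen (fun X Y => ∃ a, HStep M a X Y) W W' ∧
        BadW M.accept W' := by
  induction w with
  | nil =>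
    intro P hP hacc W hW
    exact ⟨W, Relation.ReflTransGen.refl, badW_of_bad hW (fun c hc => hacc c hc)⟩
  | cons at₁ w ih =>
    obtain ⟨a, t⟩ := at₁
    intro P hP hacc W hW
    obtain ⟨P', hT, hacc', hfin'⟩ := step_extract M hacc
    obtain ⟨W', hW'⟩ := abs_exists (K := M.cmax) (hfin' hP)
    obtain ⟨W'', hchain, hbad⟩ := ih P' (hfin' hP) hacc' W' hW'
    exact ⟨W'', Relation.ReflTransGen.head ⟨a, P, P', hP, hW, hW', t, hT⟩ hchain, hbad⟩

lemma bwd (M : ATA1 A Q) {W₀ W : List (Set (Q × ℕ))}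
    (hchain : Relation.ReflTransGen (fun X Y => ∃ a, HStep M a X Y) W₀ W)
    (hbad : BadW M.accept W) :
    ∀ P : Set (Q × NNReal), (BddF M.cmax P).Finite → IsAbstraction M.cmax P W₀ →
      ∃ w : TimedWord A, ∀ c ∈ P, M.AccFrom w c.1 c.2 := by
  induction hchain using Relation.ReflTransGen.head_induction_on with
  | refl =>
    intro P _ hW
    refine ⟨[], fun c hc => ?_⟩
    show c.1 ∈ M.accept
    exact bad_of_badW hW hbad c hc
  | head hstep hchain ih =>
    obtain ⟨a, Phat, Phat', hfinPhat, habs₁, habs₂, t, hT⟩ := hstep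
    intro P hPf hW
    obtain ⟨w₂, hw₂⟩ := ih Phat' (bddF_finite_of_abs habs₂) habs₂
    have haccPhat : ∀ c ∈ Phat, M.AccFrom ((a, t) :: w₂) c.1 c.2 := by
      obtain ⟨choice, hch, hPeq⟩ := hT
      intro c hc
      obtain ⟨gb, hgb, hsat, hchoice⟩ := hch c hc
      simp only [ATA1.AccFrom]
      refine ⟨gb, hgb, hsat, choice c, hchoice, fun qb hqb => ?_⟩
      exact hw₂ (qb.1, if qb.2 then 0 else c.2 + t)
        (by rw [hPeq]; exact Set.mem_biUnion hc ⟨qb, hqb, rfl⟩)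
    exact transfer M ((a, t) :: w₂) Phat P hPf (sim_of_abs habs₁ hW) haccPhat

end MainProof

/-- For a one-clock alternating timed automaton with
transition formulas in disjunctive normal form, the language is nonempty iff
a bad state is reachable in the region-abstracted transition system `H` from
the initial state `W₀ = H(P₀)`, `P₀ = {(q₀, 0)}`. -/
theorem lang_nonempty_iff_bad_reachable_regions
    {A Q : Type} [Fintype A] [Fintype Q] (M : ATA1 A Q) :
    M.lang.Nonempty ↔
      ∃ W₀ W : List (Set (Q × ℕ)),
        IsAbstraction M.cmax ({(M.init, 0)} : Set (Q × NNReal)) W₀ ∧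
        Relation.ReflTransGen (fun X Y => ∃ a, HStep M a X Y) W₀ W ∧
        BadW M.accept W := by
  constructor
  · rintro ⟨w, hw⟩
    have hP : ({((M.init : Q), (0 : NNReal))} : Set (Q × NNReal)).Finite :=
      Set.finite_singleton _
    obtain ⟨W₀, hW₀⟩ := abs_exists (K := M.cmax) hP
    have hacc : ∀ c ∈ ({(M.init, 0)} : Set (Q × NNReal)), M.AccFrom w c.1 c.2 := by
      rintro c hc
      rw [Set.mem_singleton_iff] at hc
      rw [hc]
      exact hw
    obtain ⟨W, hchain, hbad⟩ := fwd M w _ hP hacc W₀ hW₀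
    exact ⟨W₀, W, hW₀, hchain, hbad⟩
  · rintro ⟨W₀, W, habs₀, hchain, hbad⟩
    have hPf : (BddF M.cmax ({(M.init, 0)} : Set (Q × NNReal))).Finite := by
      apply Set.Finite.subset (Set.finite_singleton (Int.fract (((0:NNReal):ℝ))))
      rintro f ⟨c, hc, _, hf⟩
      rw [Set.mem_singleton_iff] at hc
      rw [Set.mem_singleton_iff, ← hf, hc]
    obtain ⟨w, hw⟩ := bwd M hchain hbad _ hPf habs₀
    exact ⟨w, hw (M.init, 0) rfl⟩
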